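/- Every block-1 stationary point of min_x f(x) + h(x) (h the binary indicator or the sparse penalty) is an L-stationary point, where block-1 stationarity means x̄ minimizes F along every single coordinate direction. -/

import Mathlib

open RealInnerProductSpace

/-- `‖v‖₀`: number of nonzero components. -/
noncomputable def l0norm {n : ℕ} (v : EuclideanSpace ℝ (Fin n)) : ℕ :=
  (Finset.univ.filter fun i => v i ≠ 0).card

lemma inner_eq_sum' {n : ℕ} (x y : EuclideanSpace ℝ (Fin n)) :
    ⟪x, y⟫ = ∑ i, x i * y i := by
  simp [PiLp.inner_apply, RCLike.inner_apply]
  exact Finset.sum_congr rfl fun i _ => mul_comm _ _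

lemma norm_sq_eq_sum' {n : ℕ} (x : EuclideanSpace ℝ (Fin n)) :
    ‖x‖ ^ 2 = ∑ i, (x i) ^ 2 := by
  rw [EuclideanSpace.norm_eq, Real.sq_sqrt (by positivity)]
  simp [sq_abs]

lemma l0norm_cast {n : ℕ} (v : EuclideanSpace ℝ (Fin n)) :
    (l0norm v : ℝ) = ∑ j, if v j ≠ 0 then (1 : ℝ) else 0 := by
  rw [l0norm, Finset.card_filter]
  push_cast
  simp

/-- Every block-1 stationary point of `min f(x) + h(x)` (with `h` the binary indicator
or the sparse penalty `λ‖·‖₀ + I_{[-ρ1,ρ1]}`) is an `L`-stationary point. Block-1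
stationarity: `0 ∈ argmin_δ f(x̄ + δeᵢ) + hᵢ(x̄ᵢ + δ)` for every coordinate `i`. -/
theorem block1_is_L_stationary {n : ℕ}
    (f : EuclideanSpace ℝ (Fin n) → ℝ) (g : EuclideanSpace ℝ (Fin n) → EuclideanSpace ℝ (Fin n))
    (L lam ρ : ℝ) (hL : 0 < L) (hlam : 0 < lam) (hρ : 0 < ρ)
    (s : Fin n → ℝ) (hsL : ∀ i, s i ≤ L)
    (hconv : ConvexOn ℝ Set.univ f)
    (hgrad : ∀ x, HasGradientAt f (g x) x)
    (hlip : ∀ x y, ‖g x - g y‖ ≤ L * ‖x - y‖)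
    (hcoord : ∀ (x : EuclideanSpace ℝ (Fin n)) (i : Fin n) (δ : ℝ),
      f (x + EuclideanSpace.single i δ) ≤ f x + δ * g x i + s i / 2 * δ ^ 2) :
    -- binary case: h = I_{{-1,1}ⁿ}
    (∀ xb : EuclideanSpace ℝ (Fin n), (∀ i, xb i = -1 ∨ xb i = 1) →
      (∀ (i : Fin n) (δ : ℝ), (∀ j, (xb + EuclideanSpace.single i δ) j = -1 ∨
          (xb + EuclideanSpace.single i δ) j = 1) →
        f xb ≤ f (xb + EuclideanSpace.single i δ)) →
      ∀ z : EuclideanSpace ℝ (Fin n), (∀ i, z i = -1 ∨ z i = 1) →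
        ⟪g xb, xb - xb⟫ + L / 2 * ‖xb - xb‖ ^ 2 ≤ ⟪g xb, z - xb⟫ + L / 2 * ‖z - xb‖ ^ 2) ∧
    -- sparse case: h = λ‖·‖₀ + I_{[-ρ1,ρ1]}
    (∀ xs : EuclideanSpace ℝ (Fin n), (∀ i, |xs i| ≤ ρ) →
      (∀ (i : Fin n) (δ : ℝ), (∀ j, |(xs + EuclideanSpace.single i δ) j| ≤ ρ) →
        f xs + lam * l0norm xs ≤
          f (xs + EuclideanSpace.single i δ) + lam * l0norm (xs + EuclideanSpace.single i δ)) →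
      ∀ z : EuclideanSpace ℝ (Fin n), (∀ i, |z i| ≤ ρ) →
        ⟪g xs, xs - xs⟫ + L / 2 * ‖xs - xs‖ ^ 2 + lam * l0norm xs ≤
          ⟪g xs, z - xs⟫ + L / 2 * ‖z - xs‖ ^ 2 + lam * l0norm z) := by
  constructor
  · -- binary case
    intro xb hxb hstat z hz
    have key : ∀ i : Fin n,
        0 ≤ g xb i * (z i - xb i) + L / 2 * (z i - xb i) ^ 2 := by
      intro i
      set δ : ℝ := z i - xb i with hδ
      have hfeas : ∀ j, (xb + EuclideanSpace.single i δ) j = -1 ∨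
          (xb + EuclideanSpace.single i δ) j = 1 := by
        intro j
        have : (xb + EuclideanSpace.single i δ) j =
            xb j + (if j = i then δ else 0) := by
          simp [EuclideanSpace.single_apply]
        rw [this]
        by_cases h : j = i
        · subst h
          simpa [hδ] using hz j
        · simpa [h] using hxb j
      have h1 := hstat i δ hfeas
      have h2 := hcoord xb i δ
      have h3 : s i / 2 * δ ^ 2 ≤ L / 2 * δ ^ 2 := by
        have := hsL i
        nlinarith [sq_nonneg δ]
      nlinarith [h1, h2, h3]
    rw [sub_self, inner_zero_right, norm_zero, inner_eq_sum', norm_sq_eq_sum']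
    have : (0 : ℝ) ≤ ∑ i, (g xb i * (z i - xb i) + L / 2 * (z i - xb i) ^ 2) :=
      Finset.sum_nonneg fun i _ => key i
    rw [Finset.sum_add_distrib, ← Finset.mul_sum] at this
    simp only [PiLp.sub_apply] at this ⊢
    linarith
  · -- sparse case
    intro xs hxs hstat z hz
    have key : ∀ i : Fin n,
        0 ≤ g xs i * (z i - xs i) + L / 2 * (z i - xs i) ^ 2 +
          lam * ((if z i ≠ 0 then (1 : ℝ) else 0) - (if xs i ≠ 0 then (1 : ℝ) else 0)) := by
      intro i
      set δ : ℝ := z i - xs i with hδ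
      have happ : ∀ j, (xs + EuclideanSpace.single i δ) j =
          xs j + (if j = i then δ else 0) := by
        intro j; simp [EuclideanSpace.single_apply]
      have hfeas : ∀ j, |(xs + EuclideanSpace.single i δ) j| ≤ ρ := by
        intro j
        rw [happ j]
        by_cases h : j = i
        · subst h
          simpa [hδ] using hz j
        · simpa [h] using hxs j
      have h1 := hstat i δ hfeas
      have h2 := hcoord xs i δ
      have h3 : s i / 2 * δ ^ 2 ≤ L / 2 * δ ^ 2 := by
        have := hsL i
        nlinarith [sq_nonneg δ]
      -- compare the two l0 norms
      have hvali : (xs + EuclideanSpace.single i δ) i = z i := by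
        rw [happ i]; simp [hδ]
      have hl0 : (l0norm (xs + EuclideanSpace.single i δ) : ℝ) - (l0norm xs : ℝ) =
          (if z i ≠ 0 then (1 : ℝ) else 0) - (if xs i ≠ 0 then (1 : ℝ) else 0) := by
        rw [l0norm_cast, l0norm_cast,
          ← Finset.add_sum_erase _ _ (Finset.mem_univ i),
          ← Finset.add_sum_erase Finset.univ (fun j => if xs j ≠ 0 then (1:ℝ) else 0)
            (Finset.mem_univ i), hvali]
        have : ∀ j ∈ Finset.univ.erase i,
            (if (xs + EuclideanSpace.single i δ) j ≠ 0 then (1:ℝ) else 0) =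
            (if xs j ≠ 0 then (1:ℝ) else 0) := by
          intro j hj
          have hji : j ≠ i := Finset.ne_of_mem_erase hj
          rw [happ j]
          simp [hji]
        rw [Finset.sum_congr rfl this]
        ring
      nlinarith [h1, h2, h3, hl0]
    rw [sub_self, inner_zero_right, norm_zero, inner_eq_sum', norm_sq_eq_sum',
      l0norm_cast xs, l0norm_cast z]
    have : (0 : ℝ) ≤ ∑ i, (g xs i * (z i - xs i) + L / 2 * (z i - xs i) ^ 2 +
        lam * ((if z i ≠ 0 then (1 : ℝ) else 0) - (if xs i ≠ 0 then (1 : ℝ) else 0))) :=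
      Finset.sum_nonneg fun i _ => key i
    rw [Finset.sum_add_distrib, Finset.sum_add_distrib, ← Finset.mul_sum, ← Finset.mul_sum,
      Finset.sum_sub_distrib, mul_sub] at this
    simp only [PiLp.sub_apply] at this ⊢
    linarith
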